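/- Let Z = {z ∈ R^L : Dz ≤ d} be nonempty and bounded. Then (a + Pz)ᵀx ≤ b for all z ∈ Z if and only if there exists u ≥ 0 with Dᵀu = Pᵀx and aᵀx + dᵀu ≤ b. -/

import Mathlib

open scoped BigOperators

/-- Dot product on `Fin n → ℝ`. -/
def dot {n : ℕ} (v w : Fin n → ℝ) : ℝ := ∑ i, v i * w i

section Aux

variable {E : Type*} [NormedAddCommGroup E] [NormedSpace ℝ E]
variable {ι : Type*} [Fintype ι] [DecidableEq ι]

/-- Carathéodory for cones. -/
lemma cone_cara (v : ι → E) (s : Finset ι) :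
    ∀ (c : ι → ℝ), (∀ i, 0 ≤ c i) →
    ∃ (t : Finset ι) (c' : ι → ℝ), t ⊆ s ∧ (∀ i, 0 ≤ c' i) ∧
      (∑ i ∈ t, c' i • v i) = ∑ i ∈ s, c i • v i ∧
      LinearIndependent ℝ (fun i : t => v i) := by
  induction s using Finset.strongInductionOn with
  | _ s ih =>
    intro c hc
    by_cases hli : LinearIndependent ℝ (fun i : s => v i)
    · exact ⟨s, c, subset_rfl, hc, rfl, hli⟩
    · obtain ⟨f, hf0, i₀, hfi₀⟩ := Fintype.not_linearIndependent_iff.mp hli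
      have key : ∀ f : s → ℝ, (∑ i, f i • v (i:ι)) = 0 → (∃ i, 0 < f i) →
          ∃ (t : Finset ι) (c' : ι → ℝ), t ⊆ s ∧ (∀ i, 0 ≤ c' i) ∧
            (∑ i ∈ t, c' i • v i) = ∑ i ∈ s, c i • v i ∧
            LinearIndependent ℝ (fun i : t => v i) := by
        intro f hf0 ⟨i₁, hi₁⟩
        classical
        set fe : ι → ℝ := fun i => if h : i ∈ s then f ⟨i, h⟩ else 0 with hfe
        have hfe_sum : ∑ i ∈ s, fe i • v i = 0 := by
          rw [← Finset.sum_attach s (fun i => fe i • v i)]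
          simpa [hfe] using hf0
        set P := s.filter (fun i => 0 < fe i) with hP
        have hi₁P : (i₁ : ι) ∈ P := by
          simp only [hP, Finset.mem_filter]
          exact ⟨i₁.2, by simpa [hfe] using hi₁⟩
        obtain ⟨istar, hiP, hmin⟩ := P.exists_min_image (fun i => c i / fe i) ⟨_, hi₁P⟩
        have histar_s : istar ∈ s := (Finset.mem_filter.mp hiP).1
        have histar_pos : 0 < fe istar := (Finset.mem_filter.mp hiP).2
        set r : ℝ := c istar / fe istar with hr
        have hr0 : 0 ≤ r := div_nonneg (hc _) histar_pos.le
        set c' : ι → ℝ := fun i => c i - r * fe i with hc'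
        have hc'0 : ∀ i, 0 ≤ c' i := by
          intro i
          by_cases hi : i ∈ P
          · have hfi : 0 < fe i := (Finset.mem_filter.mp hi).2
            have := hmin i hi
            have : r * fe i ≤ c i := (le_div_iff₀ hfi).mp this
            simpa [hc'] using sub_nonneg.mpr this
          · have hfi : fe i ≤ 0 := by
              by_cases his : i ∈ s
              · by_contra h
                exact hi (Finset.mem_filter.mpr ⟨his, lt_of_not_ge h⟩)
              · simp [hfe, his]
            have : r * fe i ≤ 0 := mul_nonpos_of_nonneg_of_nonpos hr0 hfi
            simp only [hc']
            linarith [hc i]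
        have hsum : ∑ i ∈ s, c' i • v i = ∑ i ∈ s, c i • v i := by
          simp only [hc', sub_smul, Finset.sum_sub_distrib]
          have : ∑ i ∈ s, (r * fe i) • v i = r • ∑ i ∈ s, fe i • v i := by
            rw [Finset.smul_sum]; simp [smul_smul]
          rw [this, hfe_sum, smul_zero, sub_zero]
        have hc'star : c' istar = 0 := by
          simp [hc', hr, mul_comm, mul_div_cancel₀ _ histar_pos.ne']
        have herase : ∑ i ∈ s.erase istar, c' i • v i = ∑ i ∈ s, c' i • v i :=
          Finset.sum_erase _ (by simp [hc'star])
        obtain ⟨t, c'', hts, hc''0, hsum'', hli''⟩ :=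
          ih (s.erase istar) (Finset.erase_ssubset histar_s) c' hc'0
        exact ⟨t, c'', hts.trans (Finset.erase_subset _ _), hc''0,
          by rw [hsum'', herase, hsum], hli''⟩
      rcases hfi₀.lt_or_gt with h | h
      · exact key (-f) (by simpa using hf0) ⟨i₀, by simpa using h⟩
      · exact key f hf0 ⟨i₀, h⟩

noncomputable def combo {κ : Type*} [Fintype κ] (w : κ → E) : (κ → ℝ) →ₗ[ℝ] E where
  toFun c := ∑ i, c i • w i
  map_add' := by intros; simp [add_smul, Finset.sum_add_distrib]
  map_smul' := by intros; simp [Finset.smul_sum, smul_smul]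

lemma cone_piece_isClosed (v : ι → E) (t : Finset ι)
    (hli : LinearIndependent ℝ (fun i : t => v i)) :
    IsClosed {x : E | ∃ c : ι → ℝ, (∀ i, 0 ≤ c i) ∧ x = ∑ i ∈ t, c i • v i} := by
  classical
  set φ := combo (fun i : t => v i) with hφ
  have hker : LinearMap.ker φ = ⊥ := by
    rw [LinearMap.ker_eq_bot']
    intro c hcq
    exact funext (Fintype.linearIndependent_iff.mp hli c hcq)
  have hemb := φ.isClosedEmbedding_of_injective hker
  have horth : IsClosed {c : t → ℝ | ∀ i, 0 ≤ c i} := by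
    have : {c : t → ℝ | ∀ i, 0 ≤ c i} = ⋂ i, {c : t → ℝ | 0 ≤ c i} := by
      ext c; simp [Set.mem_iInter]
    rw [this]
    exact isClosed_iInter fun i => isClosed_le continuous_const (continuous_apply i)
  have himg := hemb.isClosedMap _ horth
  convert himg using 1
  ext x
  constructor
  · rintro ⟨c, hc0, rfl⟩
    refine ⟨fun i => c i, fun i => hc0 i, ?_⟩
    show ∑ i : t, c i • v i = _
    rw [Finset.sum_coe_sort t (fun i => c i • v i)]
  · rintro ⟨c, hc0, rfl⟩
    refine ⟨fun i => if h : i ∈ t then c ⟨i, h⟩ else 0, ?_, ?_⟩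
    · intro i; by_cases h : i ∈ t <;> simp [h, hc0 _]
    · show ∑ i : t, c i • v i = ∑ i ∈ t, (if h : i ∈ t then c ⟨i, h⟩ else 0) • v i
      rw [← Finset.sum_coe_sort t (fun i => (if h : i ∈ t then c ⟨i, h⟩ else 0) • v i)]
      exact Finset.sum_congr rfl fun i _ => by simp [i.2]

lemma cone_isClosed (v : ι → E) :
    IsClosed {x : E | ∃ c : ι → ℝ, (∀ i, 0 ≤ c i) ∧ x = ∑ i, c i • v i} := by
  classical
  have : {x : E | ∃ c : ι → ℝ, (∀ i, 0 ≤ c i) ∧ x = ∑ i, c i • v i} =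
      ⋃ t : Finset ι, (if LinearIndependent ℝ (fun i : t => v i) then
        {x : E | ∃ c : ι → ℝ, (∀ i, 0 ≤ c i) ∧ x = ∑ i ∈ t, c i • v i} else ∅) := by
    ext x
    simp only [Set.mem_iUnion, Set.mem_setOf_eq]
    constructor
    · rintro ⟨c, hc0, rfl⟩
      obtain ⟨t, c', hts, hc'0, hsum, hli⟩ := cone_cara v Finset.univ c hc0
      exact ⟨t, by rw [if_pos hli]; exact ⟨c', hc'0, hsum.symm⟩⟩
    · rintro ⟨t, hx⟩
      by_cases hli : LinearIndependent ℝ (fun i : t => v i)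
      · rw [if_pos hli] at hx
        obtain ⟨c, hc0, rfl⟩ := hx
        refine ⟨fun i => if i ∈ t then c i else 0, fun i => by by_cases h : i ∈ t <;> simp [h, hc0 _], ?_⟩
        calc ∑ i ∈ t, c i • v i
            = ∑ i ∈ t, (if i ∈ t then c i else 0) • v i :=
              Finset.sum_congr rfl fun i hi => by rw [if_pos hi]
          _ = ∑ i : ι, (if i ∈ t then c i else 0) • v i :=
              Finset.sum_subset t.subset_univ (by intro i _ hi; simp [hi])
      · rw [if_neg hli] at hx; exact absurd hx (Set.notMem_empty x)
  rw [this]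
  exact isClosed_iUnion_of_finite fun t => by
    by_cases hli : LinearIndependent ℝ (fun i : t => v i)
    · rw [if_pos hli]; exact cone_piece_isClosed v t hli
    · rw [if_neg hli]; exact isClosed_empty

open scoped RealInnerProductSpace in
lemma farkas_cone {H : Type*} [NormedAddCommGroup H] [InnerProductSpace ℝ H]
    [CompleteSpace H] {κ : Type*} [Fintype κ] [DecidableEq κ] (v : κ → H) (x : H)
    (h : ∀ y : H, (∀ i, 0 ≤ ⟪v i, y⟫) → 0 ≤ ⟪x, y⟫) :
    ∃ c : κ → ℝ, (∀ i, 0 ≤ c i) ∧ x = ∑ i, c i • v i := by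
  by_contra hx
  push_neg at hx
  set C : Set H := {z : H | ∃ c : κ → ℝ, (∀ i, 0 ≤ c i) ∧ z = ∑ i, c i • v i} with hC
  have hxC : x ∉ C := by
    rintro ⟨c, hc0, rfl⟩
    exact hx c hc0 rfl
  set K : ConvexCone ℝ H :=
    { carrier := C
      smul_mem' := by
        rintro r hr z ⟨c, hc0, rfl⟩
        exact ⟨fun i => r * c i, fun i => mul_nonneg hr.le (hc0 i),
          by rw [Finset.smul_sum]; simp [smul_smul]⟩
      add_mem' := by
        rintro z ⟨c, hc0, rfl⟩ z' ⟨c', hc'0, rfl⟩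
        exact ⟨fun i => c i + c' i, fun i => add_nonneg (hc0 i) (hc'0 i),
          by rw [← Finset.sum_add_distrib]; simp [add_smul]⟩ } with hK
  have hne : (K : Set H).Nonempty := ⟨0, ⟨fun _ => 0, fun _ => le_refl 0, by simp⟩⟩
  have hcl : IsClosed (K : Set H) := cone_isClosed v
  obtain ⟨y, h1, h2⟩ := ProperCone.hyperplane_separation' (⟨K.toPointedCone ⟨fun _ => 0, fun _ => le_refl 0, by simp⟩, hcl⟩ : ProperCone ℝ H) hxC
  have hvy : ∀ i, 0 ≤ ⟪v i, y⟫ := by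
    intro i
    refine h1 (v i) ⟨fun j => if j = i then 1 else 0, fun j => by positivity, ?_⟩
    simp [ite_smul]
  have := h y hvy
  rw [real_inner_comm] at this
  linarith [real_inner_comm x y]

lemma farkas_matrix {L m : ℕ} (D : Matrix (Fin m) (Fin L) ℝ) (d : Fin m → ℝ)
    (c : Fin L → ℝ) (β : ℝ)
    (h : ∀ (y : Fin L → ℝ) (t : ℝ), 0 ≤ t → (∀ j, 0 ≤ D.mulVec y j + t * d j) →
      0 ≤ (∑ i, c i * y i) + t * β) :
    ∃ u : Fin m → ℝ, (∀ j, 0 ≤ u j) ∧ D.transpose.mulVec u = c ∧ ∑ j, d j * u j ≤ β := by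
  classical
  set v : Fin m ⊕ Unit → EuclideanSpace ℝ (Fin L ⊕ Unit) :=
    Sum.elim (fun j => WithLp.toLp 2 (Sum.elim (fun i => D j i) (fun _ => d j)))
      (fun _ => WithLp.toLp 2 (Sum.elim (fun _ => (0:ℝ)) (fun _ => 1))) with hv
  set w : EuclideanSpace ℝ (Fin L ⊕ Unit) := WithLp.toLp 2 (Sum.elim c (fun _ => β)) with hw
  have key : ∃ cc : Fin m ⊕ Unit → ℝ, (∀ i, 0 ≤ cc i) ∧ w = ∑ i, cc i • v i := by
    apply farkas_cone
    intro y hy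
    set yy : Fin L → ℝ := fun i => y (Sum.inl i) with hyy
    set t : ℝ := y (Sum.inr ()) with ht
    have ht0 : 0 ≤ t := by
      have := hy (Sum.inr ())
      simpa [hv, PiLp.inner_apply, Fintype.sum_sum_type, ht] using this
    have hDy : ∀ j, 0 ≤ D.mulVec yy j + t * d j := by
      intro j
      have := hy (Sum.inl j)
      simp only [hv, PiLp.inner_apply, Fintype.sum_sum_type, Sum.elim_inl,
        RCLike.inner_apply, starRingEnd_apply, star_trivial] at this
      simpa [Matrix.mulVec, dotProduct, hyy, ht, mul_comm] using this
    have := h yy t ht0 hDy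
    simp only [PiLp.inner_apply, Fintype.sum_sum_type, hw, Sum.elim_inl, Sum.elim_inr,
      RCLike.inner_apply, starRingEnd_apply, star_trivial]
    simpa [hyy, ht, mul_comm] using this
  obtain ⟨cc, hcc0, hsum⟩ := key
  have happ : ∀ a, w a = ∑ k, cc k * v k a := by
    intro a
    rw [hsum, WithLp.ofLp_sum, Finset.sum_apply a Finset.univ (fun k => (cc k • v k).ofLp)]
    rfl
  refine ⟨fun j => cc (Sum.inl j), fun j => hcc0 _, ?_, ?_⟩
  · funext i
    have := happ (Sum.inl i)
    simp only [hw, hv, Sum.elim_inl, Fintype.sum_sum_type, Sum.elim_inr] at this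
    simp only [Matrix.mulVec, dotProduct, Matrix.transpose_apply]
    rw [this]
    simp [mul_comm]
  · have := happ (Sum.inr ())
    simp only [hw, hv, Sum.elim_inl, Sum.elim_inr, Fintype.sum_sum_type] at this
    have h0 : 0 ≤ ∑ _x : Unit, cc (Sum.inr _x) * 1 := by
      simp [hcc0 _]
    have hd : ∑ j, d j * cc (Sum.inl j) = ∑ j, cc (Sum.inl j) * d j :=
      Finset.sum_congr rfl fun j _ => mul_comm _ _
    rw [hd]
    linarith

lemma mulVec_dot_swap {p q : ℕ} (M : Matrix (Fin p) (Fin q) ℝ) (z : Fin q → ℝ) (x : Fin p → ℝ) :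
    ∑ i, M.mulVec z i * x i = ∑ k, M.transpose.mulVec x k * z k := by
  simp only [Matrix.mulVec, dotProduct, Matrix.transpose_apply, Finset.sum_mul]
  rw [Finset.sum_comm]
  exact Finset.sum_congr rfl fun k _ => Finset.sum_congr rfl fun i _ => by ring


end Aux

theorem polyhedral_robust_counterpart {n L m : ℕ}
    (D : Matrix (Fin m) (Fin L) ℝ) (d : Fin m → ℝ)
    (hne : {z : Fin L → ℝ | ∀ j, D.mulVec z j ≤ d j}.Nonempty)
    (hbdd : Bornology.IsBounded {z : Fin L → ℝ | ∀ j, D.mulVec z j ≤ d j})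
    (a x : Fin n → ℝ) (P : Matrix (Fin n) (Fin L) ℝ) (b : ℝ) :
    (∀ z : Fin L → ℝ, (∀ j, D.mulVec z j ≤ d j) → dot (a + P.mulVec z) x ≤ b) ↔
      ∃ u : Fin m → ℝ, (∀ j, 0 ≤ u j) ∧
        D.transpose.mulVec u = P.transpose.mulVec x ∧ dot a x + dot d u ≤ b := by
  have hdot : ∀ z : Fin L → ℝ, dot (a + P.mulVec z) x
      = dot a x + ∑ k, P.transpose.mulVec x k * z k := by
    intro z
    rw [← mulVec_dot_swap]
    simp [dot, add_mul, Finset.sum_add_distrib, Pi.add_apply]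
  constructor
  · intro h
    have hyp : ∀ (y : Fin L → ℝ) (t : ℝ), 0 ≤ t →
        (∀ j, 0 ≤ D.mulVec y j + t * d j) →
        0 ≤ (∑ i, P.transpose.mulVec x i * y i) + t * (b - dot a x) := by
      intro y t ht0 hDy
      rcases eq_or_lt_of_le ht0 with htz | htpos
      · -- t = 0 : boundedness forces y = 0
        obtain ⟨z₀, hz₀⟩ := hne
        obtain ⟨r, hr⟩ := (isBounded_iff_forall_norm_le.mp hbdd)
        have hy0 : y = 0 := by
          by_contra hy
          have hny : 0 < ‖y‖ := norm_pos_iff.mpr hy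
          obtain ⟨k, hk⟩ := exists_nat_gt ((r + ‖z₀‖) / ‖y‖)
          have hmem : z₀ - (k : ℝ) • y ∈ {z : Fin L → ℝ | ∀ j, D.mulVec z j ≤ d j} := by
            intro j
            rw [Matrix.mulVec_sub, Matrix.mulVec_smul]
            have h1 : 0 ≤ D.mulVec y j := by have := hDy j; rw [← htz] at this; linarith
            have h2 := hz₀ j
            have : (0:ℝ) ≤ (k : ℝ) * D.mulVec y j :=
              mul_nonneg (Nat.cast_nonneg k) h1
            simp only [Pi.sub_apply, Pi.smul_apply, smul_eq_mul]
            linarith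
          have hb1 := hr _ hmem
          have hb2 : ‖(k : ℝ) • y‖ - ‖z₀‖ ≤ ‖z₀ - (k : ℝ) • y‖ := by
            rw [norm_sub_rev]
            exact norm_sub_norm_le _ _
          rw [norm_smul] at hb2
          have hk' : r + ‖z₀‖ < (k : ℝ) * ‖y‖ := (div_lt_iff₀ hny).mp hk
          simp only [Real.norm_natCast] at hb2
          linarith
        rw [hy0, ← htz]
        simp
      · -- t > 0 : scale
        set z : Fin L → ℝ := (-t⁻¹) • y with hz
        have hzfeas : ∀ j, D.mulVec z j ≤ d j := by
          intro j
          rw [hz, Matrix.mulVec_smul]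
          have hX := hDy j
          simp only [Pi.smul_apply, smul_eq_mul]
          calc -t⁻¹ * D.mulVec y j = (-D.mulVec y j) / t := by
                rw [div_eq_mul_inv]; ring
            _ ≤ d j := (div_le_iff₀ htpos).mpr (by linarith)
        have hle := h z hzfeas
        rw [hdot z] at hle
        have hsz : ∑ k, P.transpose.mulVec x k * z k
            = -t⁻¹ * ∑ i, P.transpose.mulVec x i * y i := by
          rw [Finset.mul_sum]
          exact Finset.sum_congr rfl fun i _ => by simp [hz]; ring
        rw [hsz] at hle
        have hS : -∑ i, P.transpose.mulVec x i * y i ≤ t * (b - dot a x) := by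
          have h1 := mul_le_mul_of_nonneg_left (by linarith : -t⁻¹ * ∑ i, P.transpose.mulVec x i * y i ≤ b - dot a x) ht0
          have he : t * (-t⁻¹ * ∑ i, P.transpose.mulVec x i * y i)
              = -∑ i, P.transpose.mulVec x i * y i := by
            field_simp
          linarith
        linarith
    obtain ⟨u, hu0, hDu, hβ⟩ := farkas_matrix D d (P.transpose.mulVec x) (b - dot a x) hyp
    refine ⟨u, hu0, hDu, ?_⟩
    have hd : dot d u = ∑ j, d j * u j := rfl
    linarith
  · rintro ⟨u, hu0, hDu, hub⟩ z hz
    rw [hdot z, ← hDu]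
    have key : ∑ k, D.transpose.mulVec u k * z k = ∑ j, u j * D.mulVec z j := by
      simp only [Matrix.mulVec, dotProduct, Matrix.transpose_apply, Finset.sum_mul]
      rw [Finset.sum_comm]
      refine Finset.sum_congr rfl fun j _ => ?_
      rw [Finset.mul_sum]
      exact Finset.sum_congr rfl fun k _ => by ring
    rw [key]
    have hle : ∑ j, u j * D.mulVec z j ≤ ∑ j, u j * d j :=
      Finset.sum_le_sum fun j _ => mul_le_mul_of_nonneg_left (hz j) (hu0 j)
    have hdu : ∑ j, u j * d j = dot d u := by
      simp [dot, mul_comm]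
    rw [hdu] at hle
    linarith
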